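/- Let Π = {C_1,…,C_t} be a partition of [n]. Then Π is equitable for G if and only if for any two vertices x and y belonging to the same cell of Π, every eigenvalue λ of A(G) and every j ∈ {1,…,t}, one has ⟨e_x, proj_{V_λ}(R_j)⟩ = ⟨e_y, proj_{V_λ}(R_j)⟩. -/

import Mathlib

/-- The characteristic vector of a set of vertices, as a vector of Euclidean space `ℝⁿ`. -/
noncomputable def charVec {n : ℕ} (C : Finset (Fin n)) : EuclideanSpace ℝ (Fin n) :=
  WithLp.toLp 2 (fun v => if v ∈ C then (1 : ℝ) else 0)

/-- The adjacency matrix of `G`, as a linear endomorphism of Euclidean space `ℝⁿ`. -/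
noncomputable def adjEnd {n : ℕ} (G : SimpleGraph (Fin n)) [DecidableRel G.Adj] :
    Module.End ℝ (EuclideanSpace ℝ (Fin n)) :=
  Matrix.toEuclideanLin (G.adjMatrix ℝ)

lemma adjEnd_apply {n : ℕ} (G : SimpleGraph (Fin n)) [DecidableRel G.Adj]
    (v : EuclideanSpace ℝ (Fin n)) (x : Fin n) :
    adjEnd G v x = ∑ d : Fin n, (if G.Adj x d then v d else 0) := by
  simp [adjEnd, Matrix.toEuclideanLin_apply, Matrix.mulVec, dotProduct,
    ite_mul, one_mul, zero_mul]

lemma adjEnd_isSymmetric {n : ℕ} (G : SimpleGraph (Fin n)) [DecidableRel G.Adj] :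
    (adjEnd G).IsSymmetric := by
  rw [adjEnd, ← Matrix.isHermitian_iff_isSymmetric]
  ext i j
  simp [Matrix.conjTranspose_apply, G.adj_comm]

lemma eigen_inner_zero {E : Type*} [NormedAddCommGroup E] [InnerProductSpace ℝ E]
    {T : Module.End ℝ E} (hT : T.IsSymmetric) {μ ν : ℝ} (hμν : μ ≠ ν)
    {u w : E} (hu : u ∈ Module.End.eigenspace T μ) (hw : w ∈ Module.End.eigenspace T ν) :
    (inner ℝ u w : ℝ) = 0 := by
  rw [Module.End.mem_eigenspace_iff] at hu hw
  have h1 : (inner ℝ (T u) w : ℝ) = inner ℝ u (T w) := hT u w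
  rw [hu, hw, real_inner_smul_left, real_inner_smul_right] at h1
  have h2 : (μ - ν) * (inner ℝ u w : ℝ) = 0 := by rw [sub_mul, h1, sub_self]
  exact (mul_eq_zero.mp h2).resolve_left (sub_ne_zero.mpr hμν)

/-- Any vector decomposes as a finite sum of eigenvectors of a symmetric endomorphism. -/
lemma exists_eigen_decomp {E : Type*} [NormedAddCommGroup E] [InnerProductSpace ℝ E]
    [FiniteDimensional ℝ E] (T : Module.End ℝ E) (hT : T.IsSymmetric) (v : E) :
    ∃ f : ℝ →₀ E, (∀ μ, f μ ∈ Module.End.eigenspace T μ) ∧ (f.sum fun _ u => u) = v := by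
  have h : (⨆ μ : ℝ, Module.End.eigenspace T μ) = ⊤ :=
    Submodule.orthogonal_eq_bot_iff.mp hT.orthogonalComplement_iSup_eigenspaces_eq_bot
  have hv : v ∈ ⨆ μ : ℝ, Module.End.eigenspace T μ := h ▸ Submodule.mem_top
  exact (Submodule.mem_iSup_iff_exists_finsupp _ v).mp hv

/-- The orthogonal projection onto an eigenspace picks out the corresponding component of an
eigenvector decomposition. -/
lemma proj_eigen_decomp {E : Type*} [NormedAddCommGroup E] [InnerProductSpace ℝ E]
    [FiniteDimensional ℝ E] (T : Module.End ℝ E) (hT : T.IsSymmetric) (f : ℝ →₀ E)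
    (hf : ∀ μ, f μ ∈ Module.End.eigenspace T μ) (lam : ℝ) :
    ((Submodule.orthogonalProjectionOnto (Module.End.eigenspace T lam) (f.sum fun _ u => u) :
        Module.End.eigenspace T lam) : E) = f lam := by
  classical
  set K := Module.End.eigenspace T lam with hK
  set P : E →ₗ[ℝ] E := K.subtype ∘ₗ (Submodule.orthogonalProjectionOnto K : E →L[ℝ] K).toLinearMap with hP
  have hPv : ∀ v : E, P v = (Submodule.orthogonalProjectionOnto K v : E) := fun _ => rfl
  rw [← hPv, Finsupp.sum, map_sum]
  have hterm : ∀ μ ∈ f.support, P (f μ) = if μ = lam then f lam else 0 := by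
    intro μ _
    by_cases h : μ = lam
    · subst h
      simp only [if_pos rfl, hPv]
      exact Submodule.starProjection_eq_self_iff.mpr (hf μ)
    · have hperp : f μ ∈ Kᗮ := by
        rw [Submodule.mem_orthogonal]
        intro w hw
        exact eigen_inner_zero hT (fun he => h he.symm) hw (hf μ)
      rw [if_neg h, hPv]
      rw [Submodule.orthogonalProjectionOnto_apply_of_mem_orthogonal hperp]
      rfl
  rw [Finset.sum_congr rfl hterm, Finset.sum_ite_eq' f.support lam (fun _ => f lam)]
  by_cases h : lam ∈ f.support
  · rw [if_pos h]
  · rw [if_neg h, Finsupp.notMem_support_iff.mp h]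

/-- The subspace of vectors that are constant on every cell of the partition. -/
def cellConst {n t : ℕ} (C : Fin t → Finset (Fin n)) :
    Submodule ℝ (EuclideanSpace ℝ (Fin n)) where
  carrier := {v | ∀ i : Fin t, ∀ x ∈ C i, ∀ y ∈ C i, v x = v y}
  add_mem' := by
    intro a b ha hb i x hx y hy
    have : ∀ z : Fin n, (a + b) z = a z + b z := fun _ => rfl
    rw [this, this, ha i x hx y hy, hb i x hx y hy]
  zero_mem' := by intro i x hx y hy; rfl
  smul_mem' := by
    intro c a ha i x hx y hy
    have : ∀ z : Fin n, (c • a) z = c * a z := fun _ => rfl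
    rw [this, this, ha i x hx y hy]

lemma cellConst_def {n t : ℕ} (C : Fin t → Finset (Fin n))
    (v : EuclideanSpace ℝ (Fin n)) (hv : v ∈ cellConst C) :
    ∀ i : Fin t, ∀ x ∈ C i, ∀ y ∈ C i, v x = v y := hv

lemma charVec_mem_cellConst {n t : ℕ} (C : Fin t → Finset (Fin n))
    (hdisj : ∀ i j : Fin t, i ≠ j → Disjoint (C i) (C j)) (j : Fin t) :
    charVec (C j) ∈ cellConst C := by
  intro i x hx y hy
  show (if x ∈ C j then (1:ℝ) else 0) = (if y ∈ C j then (1:ℝ) else 0)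
  by_cases h : i = j
  · subst h; rw [if_pos hx, if_pos hy]
  · rw [if_neg (Finset.disjoint_left.mp (hdisj i j h) hx),
      if_neg (Finset.disjoint_left.mp (hdisj i j h) hy)]

lemma sum_partition {n t : ℕ} (C : Fin t → Finset (Fin n))
    (hdisj : ∀ i j : Fin t, i ≠ j → Disjoint (C i) (C j))
    (hcover : ∀ v : Fin n, ∃ i : Fin t, v ∈ C i) (F : Fin n → ℝ) :
    ∑ d : Fin n, F d = ∑ j : Fin t, ∑ d ∈ C j, F d := by
  have huniv : (Finset.univ : Finset (Fin n)) = Finset.univ.biUnion C := by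
    ext d
    simpa using hcover d
  rw [huniv, Finset.sum_biUnion (fun a _ b _ hab => hdisj a b hab)]

/-- If the partition is equitable, the adjacency map preserves the space of cell-constant
vectors. -/
lemma adjEnd_mem_cellConst {n t : ℕ} (G : SimpleGraph (Fin n)) [DecidableRel G.Adj]
    (C : Fin t → Finset (Fin n))
    (hdisj : ∀ i j : Fin t, i ≠ j → Disjoint (C i) (C j))
    (hcover : ∀ v : Fin n, ∃ i : Fin t, v ∈ C i)
    (hne : ∀ i : Fin t, (C i).Nonempty)
    (hEq : ∀ i j : Fin t, ∀ x ∈ C i, ∀ y ∈ C i,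
        ((C j).filter (fun d => G.Adj x d)).card =
        ((C j).filter (fun d => G.Adj y d)).card) :
    ∀ v ∈ cellConst C, adjEnd G v ∈ cellConst C := by
  intro v hv i x hx y hy
  rw [adjEnd_apply, adjEnd_apply, sum_partition C hdisj hcover, sum_partition C hdisj hcover]
  refine Finset.sum_congr rfl fun j _ => ?_
  have key : ∀ z ∈ C i, (∑ d ∈ C j, if G.Adj z d then v d else 0)
      = (((C j).filter (fun d => G.Adj z d)).card : ℝ) * v ((hne j).choose) := by
    intro z hz
    rw [← Finset.sum_filter]
    rw [Finset.sum_congr rfl (fun d hd =>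
      hv j d (Finset.mem_of_mem_filter d hd) ((hne j).choose) (hne j).choose_spec)]
    rw [Finset.sum_const, nsmul_eq_mul]
  rw [key x hx, key y hy, hEq i j x hx y hy]

/-- If the partition is equitable, eigenspace projections of cell characteristic vectors are
cell-constant. -/
lemma proj_charVec_mem {n t : ℕ} (G : SimpleGraph (Fin n)) [DecidableRel G.Adj]
    (C : Fin t → Finset (Fin n))
    (hinv : ∀ v ∈ cellConst C, adjEnd G v ∈ cellConst C)
    (lam : ℝ) (j : Fin t) (hcv : charVec (C j) ∈ cellConst C) :
    ((Submodule.orthogonalProjectionOnto (Module.End.eigenspace (adjEnd G) lam) (charVec (C j)) :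
        Module.End.eigenspace (adjEnd G) lam) : EuclideanSpace ℝ (Fin n)) ∈ cellConst C := by
  classical
  set U := cellConst C
  set T' : U →ₗ[ℝ] U := (adjEnd G).restrict hinv with hT'def
  have hT' : T'.IsSymmetric := by
    intro u w
    have h := adjEnd_isSymmetric G (u : EuclideanSpace ℝ (Fin n)) (w : EuclideanSpace ℝ (Fin n))
    rw [Submodule.coe_inner, Submodule.coe_inner, hT'def,
      LinearMap.restrict_coe_apply, LinearMap.restrict_coe_apply]
    exact h
  obtain ⟨f, hf, hsum⟩ := exists_eigen_decomp T' hT' ⟨charVec (C j), hcv⟩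
  set g : ℝ →₀ EuclideanSpace ℝ (Fin n) :=
    f.mapRange (Subtype.val : U → EuclideanSpace ℝ (Fin n)) rfl with hgdef
  have hg : ∀ μ, g μ ∈ Module.End.eigenspace (adjEnd G) μ := by
    intro μ
    rw [Module.End.mem_eigenspace_iff]
    have h1 := Module.End.mem_eigenspace_iff.mp (hf μ)
    have h2 := congrArg (Subtype.val) h1
    rw [hT'def, LinearMap.restrict_coe_apply] at h2
    simpa [hgdef, Finsupp.mapRange_apply] using h2
  have hgsum : (g.sum fun _ u => u) = charVec (C j) := by
    rw [hgdef, Finsupp.sum_mapRange_index (fun _ => rfl)]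
    have h3 : (f.sum fun _ (u : U) => (u : EuclideanSpace ℝ (Fin n)))
        = (((f.sum fun _ u => u) : U) : EuclideanSpace ℝ (Fin n)) := by
      rw [Finsupp.sum, Finsupp.sum]
      exact (AddSubmonoidClass.coe_finset_sum _ _).symm
    rw [h3, hsum]
  have hproj := proj_eigen_decomp (adjEnd G) (adjEnd_isSymmetric G) g hg lam
  rw [hgsum] at hproj
  rw [hproj, hgdef, Finsupp.mapRange_apply]
  exact (f lam).2

lemma euclid_sum_apply {n : ℕ} {ι : Type*} (s : Finset ι)
    (F : ι → EuclideanSpace ℝ (Fin n)) (x : Fin n) :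
    (∑ i ∈ s, F i) x = ∑ i ∈ s, F i x := by
  classical
  induction s using Finset.induction with
  | empty => rfl
  | insert _ _ h ih =>
    rw [Finset.sum_insert h, Finset.sum_insert h, ← ih]
    rfl

lemma inner_single_eq {n : ℕ} (x : Fin n) (v : EuclideanSpace ℝ (Fin n)) :
    (inner ℝ (EuclideanSpace.single x (1 : ℝ)) v : ℝ) = v x := by
  rw [EuclideanSpace.inner_single_left]
  simp

/-- Lemma 1: a partition `Π = {C_1, …, C_t}` of `[n]` is equitable for `G` if and only if
for any two vertices `x, y` in the same cell, every eigenvalue `λ` of `A(G)` and every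
cell index `j`, one has `⟨e_x, proj_{V_λ}(R_j)⟩ = ⟨e_y, proj_{V_λ}(R_j)⟩`. -/
theorem equitable_iff_eigenspace_projections
    {n t : ℕ} (G : SimpleGraph (Fin n)) [DecidableRel G.Adj]
    (C : Fin t → Finset (Fin n))
    (hdisj : ∀ i j : Fin t, i ≠ j → Disjoint (C i) (C j))
    (hcover : ∀ v : Fin n, ∃ i : Fin t, v ∈ C i)
    (hne : ∀ i : Fin t, (C i).Nonempty) :
    (∀ i j : Fin t, ∀ x ∈ C i, ∀ y ∈ C i,
        ((C j).filter (fun d => G.Adj x d)).card =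
        ((C j).filter (fun d => G.Adj y d)).card) ↔
    (∀ i : Fin t, ∀ x ∈ C i, ∀ y ∈ C i, ∀ lam : ℝ,
        Module.End.HasEigenvalue (adjEnd G) lam →
        ∀ j : Fin t,
          (inner ℝ (EuclideanSpace.single x (1 : ℝ))
            ((Submodule.orthogonalProjectionOnto (Module.End.eigenspace (adjEnd G) lam) (charVec (C j)) :
                Module.End.eigenspace (adjEnd G) lam) :
              EuclideanSpace ℝ (Fin n)) : ℝ) =
          (inner ℝ (EuclideanSpace.single y (1 : ℝ))
            ((Submodule.orthogonalProjectionOnto (Module.End.eigenspace (adjEnd G) lam) (charVec (C j)) :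
                Module.End.eigenspace (adjEnd G) lam) :
              EuclideanSpace ℝ (Fin n)) : ℝ)) := by
  constructor
  · intro hEq i x hx y hy lam _ j
    rw [inner_single_eq, inner_single_eq]
    exact cellConst_def C _
      (proj_charVec_mem G C
        (adjEnd_mem_cellConst G C hdisj hcover hne hEq) lam j
        (charVec_mem_cellConst C hdisj j)) i x hx y hy
  · intro hP i j x hx y hy
    have hcard : ∀ z : Fin n, adjEnd G (charVec (C j)) z
        = (((C j).filter (fun d => G.Adj z d)).card : ℝ) := by
      intro z
      rw [adjEnd_apply]
      have hterm : ∀ d : Fin n, (if G.Adj z d then charVec (C j) d else 0)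
          = if d ∈ (C j).filter (fun d => G.Adj z d) then (1 : ℝ) else 0 := by
        intro d
        show (if G.Adj z d then (if d ∈ C j then (1:ℝ) else 0) else 0) = _
        by_cases h1 : G.Adj z d <;> by_cases h2 : d ∈ C j <;>
          simp [h1, h2, Finset.mem_filter]
      rw [Finset.sum_congr rfl (fun d _ => hterm d), Finset.sum_ite_mem,
        Finset.univ_inter, Finset.sum_const, nsmul_eq_mul, mul_one]
    have hmain : adjEnd G (charVec (C j)) x = adjEnd G (charVec (C j)) y := by
      obtain ⟨f, hf, hsum⟩ :=
        exists_eigen_decomp (adjEnd G) (adjEnd_isSymmetric G) (charVec (C j))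
      have hfx : ∀ μ ∈ f.support, (f μ) x = (f μ) y := by
        intro μ hμ
        by_cases h0 : f μ = 0
        · rw [h0]; rfl
        · have hev : Module.End.HasEigenvalue (adjEnd G) μ :=
            Module.End.hasEigenvalue_of_hasEigenvector ⟨hf μ, h0⟩
          have := hP i x hx y hy μ hev j
          rw [inner_single_eq, inner_single_eq] at this
          have hproj := proj_eigen_decomp (adjEnd G) (adjEnd_isSymmetric G) f hf μ
          rw [hsum] at hproj
          rw [← hproj]
          exact this
      have happ : ∀ z : Fin n, adjEnd G (charVec (C j)) z
          = ∑ μ ∈ f.support, μ * (f μ) z := by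
        intro z
        rw [← hsum, Finsupp.sum, map_sum, euclid_sum_apply]
        refine Finset.sum_congr rfl fun μ hμ => ?_
        have := Module.End.mem_eigenspace_iff.mp (hf μ)
        rw [this]
        rfl
      rw [happ x, happ y]
      exact Finset.sum_congr rfl fun μ hμ => by rw [hfx μ hμ]
    have : (((C j).filter (fun d => G.Adj x d)).card : ℝ)
        = (((C j).filter (fun d => G.Adj y d)).card : ℝ) := by
      rw [← hcard x, ← hcard y, hmain]
    exact_mod_cast this
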